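/- Let X be a Tychonoff (completely regular Hausdorff) space. The following are equivalent: (1) C(X) with the Vietoris topology τ_V is metrizable; (2) (C(X), τ_V) is first countable; (3) (C(X), τ_V) is a Fréchet–Urysohn space; (4) (C(X), τ_V) is a sequential space; (5) X is countably compact; (6) on C(X), the Vietoris topology τ_V coincides with the topology τ_U of uniform convergence (the topology of the supremum metric d(f,g) = sup_{x∈X} |f(x) − g(x)|). -/

import Mathlib

open Set Topology TopologicalSpace

/-- The set of values of a set-valued map (identified with its graph) at a point. -/
def valuesAt {X : Type*} (F : Set (X × ℝ)) (x : X) : Set ℝ := {y | (x, y) ∈ F}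

/-- A set-valued map (identified with its graph) is cusco: upper semicontinuous at every
point, with nonempty compact convex values. -/
def IsCusco {X : Type*} [TopologicalSpace X] (F : Set (X × ℝ)) : Prop :=
  (∀ x : X, ∀ V : Set ℝ, IsOpen V → valuesAt F x ⊆ V →
    ∃ U : Set X, IsOpen U ∧ x ∈ U ∧ ∀ u ∈ U, valuesAt F u ⊆ V) ∧
  (∀ x : X, (valuesAt F x).Nonempty ∧ IsCompact (valuesAt F x) ∧ Convex ℝ (valuesAt F x))

/-- A minimal cusco map, i.e. a cusco map containing no proper cusco submap. -/
def IsMinimalCusco {X : Type*} [TopologicalSpace X] (F : Set (X × ℝ)) : Prop :=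
  IsCusco F ∧ ∀ G : Set (X × ℝ), IsCusco G → G ⊆ F → G = F

/-- `L(X)`: all cusco maps from `X` to `ℝ`. -/
def LSet (X : Type*) [TopologicalSpace X] : Set (Set (X × ℝ)) := {F | IsCusco F}

/-- `L₀(X)`: cusco maps that are single-valued at each isolated point. -/
def L0Set (X : Type*) [TopologicalSpace X] : Set (Set (X × ℝ)) :=
  {F | IsCusco F ∧ ∀ x : X, IsOpen ({x} : Set X) → ∃ y : ℝ, valuesAt F x = {y}}

/-- `MC(X)`: all minimal cusco maps from `X` to `ℝ`. -/
def MCSet (X : Type*) [TopologicalSpace X] : Set (Set (X × ℝ)) := {F | IsMinimalCusco F}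

/-- The upper Vietoris topology on a family of subsets of `X × ℝ`. -/
def upperVietoris {X : Type*} [TopologicalSpace X] (S : Set (Set (X × ℝ))) :
    TopologicalSpace S :=
  .generateFrom {U | ∃ W : Set (X × ℝ), IsOpen W ∧ U = {A : S | (A : Set (X × ℝ)) ⊆ W}}

/-- The Vietoris topology on a family of subsets of `X × ℝ`. -/
def vietoris {X : Type*} [TopologicalSpace X] (S : Set (Set (X × ℝ))) :
    TopologicalSpace S :=
  .generateFrom
    ({U | ∃ W : Set (X × ℝ), IsOpen W ∧ U = {A : S | (A : Set (X × ℝ)) ⊆ W}} ∪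
     {U | ∃ W : Set (X × ℝ), IsOpen W ∧ U = {A : S | ((A : Set (X × ℝ)) ∩ W).Nonempty}})

/-- The graph of a function `X → ℝ`. -/
def graphOf {X : Type*} (f : X → ℝ) : Set (X × ℝ) := {p | p.2 = f p.1}

/-- `X` is countably compact: every countable open cover has a finite subcover. -/
def CountablyCompact (X : Type*) [TopologicalSpace X] : Prop :=
  ∀ U : ℕ → Set X, (∀ n, IsOpen (U n)) → (⋃ n, U n) = Set.univ →
    ∃ t : Finset ℕ, (⋃ n ∈ t, U n) = Set.univ

/-- The Vietoris topology on `C(X, ℝ)`, continuous functions being identified with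
their graphs in `X × ℝ`. -/
def cxVietoris (X : Type*) [TopologicalSpace X] : TopologicalSpace C(X, ℝ) :=
  .generateFrom
    ({U | ∃ W : Set (X × ℝ), IsOpen W ∧ U = {f : C(X, ℝ) | graphOf ⇑f ⊆ W}} ∪
     {U | ∃ W : Set (X × ℝ), IsOpen W ∧ U = {f : C(X, ℝ) | (graphOf ⇑f ∩ W).Nonempty}})

/-- The topology of uniform convergence on `C(X, ℝ)`, generated by the balls of the
(possibly infinite-valued) supremum metric `d(f,g) = sup_x |f x - g x|`. -/
def cxUniform (X : Type*) [TopologicalSpace X] : TopologicalSpace C(X, ℝ) :=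
  .generateFrom {B | ∃ (f : C(X, ℝ)) (ε : ℝ), 0 < ε ∧
    B = {g : C(X, ℝ) | ∃ c : ℝ, c < ε ∧ ∀ x : X, |g x - f x| ≤ c}}

namespace CxTFAE

variable {X : Type*} [TopologicalSpace X]

/-- truncated sup distance -/
noncomputable def vdist (f g : C(X, ℝ)) : ℝ := ⨆ x : X, min 1 |f x - g x|

lemma vdist_bdd (f g : C(X, ℝ)) : BddAbove (range fun x => min 1 |f x - g x|) :=
  ⟨1, by rintro y ⟨x, rfl⟩; exact min_le_left _ _⟩

lemma vdist_nonneg (f g : C(X, ℝ)) : 0 ≤ vdist f g :=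
  Real.iSup_nonneg fun x => le_min zero_le_one (abs_nonneg _)

lemma term_le_vdist (f g : C(X, ℝ)) (x : X) : min 1 |f x - g x| ≤ vdist f g :=
  le_ciSup (vdist_bdd f g) x

lemma vdist_le {f g : C(X, ℝ)} {c : ℝ} (h : ∀ x, min 1 |f x - g x| ≤ c) (hc : 0 ≤ c) :
    vdist f g ≤ c := Real.iSup_le h hc

lemma vdist_comm (f g : C(X, ℝ)) : vdist f g = vdist g f := by
  unfold vdist; congr 1; funext x; rw [abs_sub_comm]

lemma vdist_self (f : C(X, ℝ)) : vdist f f = 0 :=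
  le_antisymm (vdist_le (fun x => by simp) le_rfl) (vdist_nonneg f f)

lemma vdist_triangle (f g h : C(X, ℝ)) : vdist f h ≤ vdist f g + vdist g h := by
  apply vdist_le _ (add_nonneg (vdist_nonneg _ _) (vdist_nonneg _ _))
  intro x
  have h1 := term_le_vdist f g x
  have h2 := term_le_vdist g h x
  have key : min 1 |f x - h x| ≤ min 1 |f x - g x| + min 1 |g x - h x| := by
    rcases le_or_gt 1 |f x - g x| with hc | hc
    · have e : min 1 |f x - g x| = 1 := min_eq_left hc
      have h3 : min 1 |f x - h x| ≤ 1 := min_le_left _ _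
      have h4 : (0:ℝ) ≤ min 1 |g x - h x| := le_min zero_le_one (abs_nonneg _)
      linarith
    · rcases le_or_gt 1 |g x - h x| with hd | hd
      · have e : min 1 |g x - h x| = 1 := min_eq_left hd
        have h3 : min 1 |f x - h x| ≤ 1 := min_le_left _ _
        have h4 : (0:ℝ) ≤ min 1 |f x - g x| := le_min zero_le_one (abs_nonneg _)
        linarith
      · have e1 : min 1 |f x - g x| = |f x - g x| := min_eq_right hc.le
        have e2 : min 1 |g x - h x| = |g x - h x| := min_eq_right hd.le
        have := abs_sub_le (f x) (g x) (h x)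
        have h3 : min 1 |f x - h x| ≤ |f x - h x| := min_le_right _ _
        linarith
  linarith [key]

lemma eq_of_vdist_eq_zero {f g : C(X, ℝ)} (h : vdist f g = 0) : f = g := by
  ext x
  have h1 := term_le_vdist f g x
  rw [h] at h1
  by_contra hne
  have : 0 < |f x - g x| := abs_pos.mpr (sub_ne_zero.mpr hne)
  have : 0 < min 1 |f x - g x| := lt_min one_pos this
  linarith

/-- pointwise bound from a small vdist -/
lemma abs_le_vdist {f g : C(X, ℝ)} (h : vdist f g < 1) (x : X) : |f x - g x| ≤ vdist f g := by
  have h1 := term_le_vdist f g x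
  rcases le_total |f x - g x| 1 with hc | hc
  · rwa [min_eq_right hc] at h1
  · rw [min_eq_left hc] at h1; linarith

lemma vdist_lt_of_forall_le {f g : C(X, ℝ)} {c ε : ℝ} (hc : c < ε) (hε : 0 < ε)
    (h : ∀ x, |f x - g x| ≤ c) : vdist f g < ε := by
  have : vdist f g ≤ max c 0 := by
    apply vdist_le _ (le_max_right _ _)
    intro x
    exact le_trans (min_le_right _ _) (le_trans (h x) (le_max_left _ _))
  exact lt_of_le_of_lt this (max_lt hc hε)

/-- characterization of `cxUniform`-open sets via `vdist`. -/
lemma isOpen_cxUniform_iff (s : Set C(X, ℝ)) :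
    IsOpen[cxUniform X] s ↔ ∀ g ∈ s, ∃ ε > 0, ∀ h, vdist g h < ε → h ∈ s := by
  constructor
  · intro hs
    have hs' : GenerateOpen {B | ∃ (f : C(X, ℝ)) (ε : ℝ), 0 < ε ∧
        B = {g : C(X, ℝ) | ∃ c : ℝ, c < ε ∧ ∀ x : X, |g x - f x| ≤ c}} s := hs
    clear hs
    induction hs' with
    | basic u hu =>
        obtain ⟨f, ε, hε, rfl⟩ := hu
        rintro g ⟨c, hc, hb⟩
        refine ⟨min ((ε - c)/2) 1, lt_min (by linarith) one_pos, fun h hh => ?_⟩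
        have hlt1 : vdist g h < 1 := lt_of_lt_of_le hh (min_le_right _ _)
        have hlt2 : vdist g h < (ε - c)/2 := lt_of_lt_of_le hh (min_le_left _ _)
        refine ⟨c + vdist g h, by linarith, fun x => ?_⟩
        have := abs_le_vdist hlt1 x
        calc |h x - f x| ≤ |h x - g x| + |g x - f x| := abs_sub_le _ _ _
          _ ≤ vdist g h + c := by
              rw [abs_sub_comm]
              exact add_le_add this (hb x)
          _ = c + vdist g h := by ring
    | univ => exact fun g _ => ⟨1, one_pos, fun _ _ => trivial⟩
    | inter u v _ _ ihu ihv =>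
        rintro g ⟨hgu, hgv⟩
        obtain ⟨ε₁, hε₁, h₁⟩ := ihu g hgu
        obtain ⟨ε₂, hε₂, h₂⟩ := ihv g hgv
        exact ⟨min ε₁ ε₂, lt_min hε₁ hε₂, fun h hh =>
          ⟨h₁ h (lt_of_lt_of_le hh (min_le_left _ _)), h₂ h (lt_of_lt_of_le hh (min_le_right _ _))⟩⟩
    | sUnion S _ ih =>
        rintro g ⟨u, hu, hg⟩
        obtain ⟨ε, hε, h⟩ := ih u hu g hg
        exact ⟨ε, hε, fun h' hh => ⟨u, hu, h h' hh⟩⟩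
  · intro H
    have key : ∀ g : C(X, ℝ), g ∈ s → ∃ ε : ℝ, 0 < ε ∧ ε ≤ 1 ∧ ∀ h, vdist g h < ε → h ∈ s := by
      intro g hg
      obtain ⟨ε, hε, h⟩ := H g hg
      exact ⟨min ε 1, lt_min hε one_pos, min_le_right _ _,
        fun h' hh => h h' (lt_of_lt_of_le hh (min_le_left _ _))⟩
    choose! ε hε hε1 hsub using key
    have hrw : s = ⋃ g : s, {h : C(X, ℝ) | ∃ c : ℝ, c < ε g ∧ ∀ x : X, |h x - (g : C(X,ℝ)) x| ≤ c} := by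
      apply Set.eq_of_subset_of_subset
      · intro g hg
        exact Set.mem_iUnion.mpr ⟨⟨g, hg⟩, ⟨0, hε g hg, fun x => by simp⟩⟩
      · rintro h hh
        obtain ⟨⟨g, hg⟩, ⟨c, hc, hb⟩⟩ := Set.mem_iUnion.mp hh
        apply hsub g hg
        rw [vdist_comm]
        exact vdist_lt_of_forall_le hc (hε g hg) hb
    rw [hrw]
    exact @isOpen_iUnion _ _ (cxUniform X) _ fun g =>
      TopologicalSpace.GenerateOpen.basic _ ⟨(g : C(X,ℝ)), ε g, hε g g.2, rfl⟩

lemma metrizable_uniform : @MetrizableSpace C(X, ℝ) (cxUniform X) := by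
  letI := cxUniform X
  have H : ∀ s : Set C(X, ℝ), IsOpen s ↔ ∀ x ∈ s, ∃ ε > 0, ∀ y, vdist x y < ε → y ∈ s := by
    intro s
    rw [isOpen_cxUniform_iff]
  letI := MetricSpace.ofDistTopology vdist vdist_self vdist_comm vdist_triangle H
    (fun f g => eq_of_vdist_eq_zero)
  infer_instance




lemma vietoris_le_uniform : cxVietoris X ≤ cxUniform X := by
  rw [cxUniform]
  rw [le_generateFrom_iff_subset_isOpen]
  rintro s ⟨f, ε, hε, rfl⟩
  -- show the ball is Vietoris-open
  have key : ∀ g : C(X, ℝ), (∃ c : ℝ, c < ε ∧ ∀ x : X, |g x - f x| ≤ c) →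
      ∃ W : Set (X × ℝ), IsOpen W ∧ graphOf ⇑g ⊆ W ∧
        {h : C(X, ℝ) | graphOf ⇑h ⊆ W} ⊆ {h : C(X, ℝ) | ∃ c : ℝ, c < ε ∧ ∀ x : X, |h x - f x| ≤ c} := by
    rintro g ⟨c, hc, hb⟩
    refine ⟨{p : X × ℝ | |p.2 - g p.1| < (ε - c)/2}, ?_, ?_, ?_⟩
    · exact isOpen_lt (Continuous.abs (continuous_snd.sub (g.continuous.comp continuous_fst)))
        continuous_const
    · rintro ⟨x, y⟩ hp
      simp only [graphOf, mem_setOf_eq] at hp ⊢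
      rw [hp]; simpa using by linarith
    · rintro h hh
      refine ⟨c + (ε - c)/2, by linarith, fun x => ?_⟩
      have hx : |h x - g x| < (ε - c)/2 := hh (show (x, h x) ∈ graphOf ⇑h from rfl)
      calc |h x - f x| ≤ |h x - g x| + |g x - f x| := abs_sub_le _ _ _
        _ ≤ (ε - c)/2 + c := add_le_add hx.le (hb x)
        _ = c + (ε - c)/2 := by ring
  choose! W hWopen hWg hWsub using key
  have hrw : {g : C(X, ℝ) | ∃ c : ℝ, c < ε ∧ ∀ x : X, |g x - f x| ≤ c} =
      ⋃ g : {g : C(X, ℝ) | ∃ c : ℝ, c < ε ∧ ∀ x : X, |g x - f x| ≤ c},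
        {h : C(X, ℝ) | graphOf ⇑h ⊆ W g} := by
    apply Set.eq_of_subset_of_subset
    · intro g hg
      exact Set.mem_iUnion.mpr ⟨⟨g, hg⟩, hWg g hg⟩
    · rintro h hh
      obtain ⟨⟨g, hg⟩, hmem⟩ := Set.mem_iUnion.mp hh
      exact hWsub g hg hmem
  rw [hrw]
  exact @isOpen_iUnion _ _ (cxVietoris X) _ fun g =>
    TopologicalSpace.GenerateOpen.basic _ (Or.inl ⟨W g, hWopen g g.2, rfl⟩)

lemma minus_uniform_open {W : Set (X × ℝ)} (hW : IsOpen W) :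
    IsOpen[cxUniform X] {f : C(X, ℝ) | (graphOf ⇑f ∩ W).Nonempty} := by
  rw [isOpen_cxUniform_iff]
  rintro g ⟨⟨x, y⟩, hgr, hmem⟩
  have hy : y = g x := hgr
  subst hy
  obtain ⟨u, v, hu, hv, hxu, hyv, huv⟩ := isOpen_prod_iff.mp hW x (g x) hmem
  obtain ⟨δ, hδ, hball⟩ := Metric.isOpen_iff.mp hv (g x) hyv
  refine ⟨min δ 1, lt_min hδ one_pos, fun h hh => ?_⟩
  have h1 : vdist g h < 1 := lt_of_lt_of_le hh (min_le_right _ _)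
  have h2 : |g x - h x| < δ := lt_of_le_of_lt (abs_le_vdist h1 x) (lt_of_lt_of_le hh (min_le_left _ _))
  refine ⟨(x, h x), rfl, huv ⟨hxu, hball ?_⟩⟩
  rw [Metric.mem_ball, Real.dist_eq, abs_sub_comm]
  exact h2

lemma plus_uniform_open (hcc : CountablyCompact X) {W : Set (X × ℝ)} (hW : IsOpen W) :
    IsOpen[cxUniform X] {f : C(X, ℝ) | graphOf ⇑f ⊆ W} := by
  rw [isOpen_cxUniform_iff]
  intro f hf
  set G : ℕ → Set X := fun n => ⋃₀ {s | ∃ U a b, IsOpen U ∧ U ×ˢ Ioo a b ⊆ W ∧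
    s = U ∩ ⇑f ⁻¹' (Ioo (a + 1/(n+1)) (b - 1/(n+1)))} with hG
  have hGopen : ∀ n, IsOpen (G n) := by
    intro n
    apply isOpen_sUnion
    rintro s ⟨U, a, b, hU, _, rfl⟩
    exact hU.inter (isOpen_Ioo.preimage f.continuous)
  have hGmono : ∀ n m, n ≤ m → G n ⊆ G m := by
    intro n m hnm x hx
    obtain ⟨s, ⟨U, a, b, hU, hUW, rfl⟩, hxU, hxf⟩ := hx
    have hle : 1/((m:ℝ)+1) ≤ 1/((n:ℝ)+1) := by
      apply one_div_le_one_div_of_le (by positivity)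
      exact_mod_cast by omega
    refine ⟨U ∩ ⇑f ⁻¹' (Ioo (a + 1/(m+1)) (b - 1/(m+1))), ⟨U, a, b, hU, hUW, rfl⟩, hxU, ?_⟩
    simp only [mem_preimage, mem_Ioo] at hxf ⊢
    constructor <;> [linarith [hxf.1]; linarith [hxf.2]]
  have hGcover : (⋃ n, G n) = Set.univ := by
    apply Set.eq_univ_of_forall
    intro x
    have hx : (x, f x) ∈ W := hf (show (x, f x) ∈ graphOf ⇑f from rfl)
    obtain ⟨u, v, hu, hv, hxu, hyv, huv⟩ := isOpen_prod_iff.mp hW x (f x) hx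
    obtain ⟨δ, hδ, hball⟩ := Metric.isOpen_iff.mp hv (f x) hyv
    obtain ⟨n, hn⟩ := exists_nat_one_div_lt hδ
    refine Set.mem_iUnion.mpr ⟨n, ⟨u ∩ ⇑f ⁻¹' (Ioo ((f x - δ) + 1/(n+1)) ((f x + δ) - 1/(n+1))),
      ⟨u, f x - δ, f x + δ, hu, ?_, rfl⟩, hxu, ?_⟩⟩
    · rintro ⟨z, w⟩ ⟨hz, hw⟩
      apply huv
      refine ⟨hz, hball ?_⟩
      rw [Metric.mem_ball, Real.dist_eq]
      rw [mem_Ioo] at hw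
      rw [abs_lt]; constructor <;> [linarith [hw.1]; linarith [hw.2]]
    · simp only [mem_preimage, mem_Ioo]
      have : (0:ℝ) < 1/((n:ℝ)+1) := by positivity
      constructor <;> linarith
  obtain ⟨t, ht⟩ := hcc G hGopen hGcover
  set N := t.sup id with hN
  have hGN : ∀ x : X, x ∈ G N := by
    intro x
    have : x ∈ ⋃ n ∈ t, G n := ht ▸ Set.mem_univ x
    obtain ⟨n, hn, hx⟩ := Set.mem_iUnion₂.mp this
    exact hGmono n N (Finset.le_sup (f := id) hn) hx
  refine ⟨1/((N:ℝ)+1), by positivity, fun h hh => ?_⟩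
  rintro ⟨x, y⟩ hp
  have hy : y = h x := hp
  subst hy
  obtain ⟨s, ⟨U, a, b, hU, hUW, rfl⟩, hxU, hxf⟩ := hGN x
  have h1 : vdist f h < 1 := by
    apply lt_of_lt_of_le hh
    rw [div_le_one (by positivity)]
    linarith [Nat.cast_nonneg (α := ℝ) N]
  have h2 : |f x - h x| < 1/((N:ℝ)+1) := lt_of_le_of_lt (abs_le_vdist h1 x) hh
  simp only [mem_preimage, mem_Ioo] at hxf
  apply hUW
  refine ⟨hxU, ?_⟩
  rw [mem_Ioo, abs_lt] at *
  constructor <;> [linarith [h2.1, hxf.1]; linarith [h2.2, hxf.2]]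

lemma vietoris_eq_uniform (hcc : CountablyCompact X) : cxVietoris X = cxUniform X := by
  apply le_antisymm vietoris_le_uniform
  rw [cxVietoris, le_generateFrom_iff_subset_isOpen]
  rintro s (⟨W, hW, rfl⟩ | ⟨W, hW, rfl⟩)
  · exact plus_uniform_open hcc hW
  · exact minus_uniform_open hW

/-- basic neighborhoods in the Vietoris topology -/
lemma vietoris_nbhd {O : Set C(X, ℝ)} (hO : IsOpen[cxVietoris X] O) :
    ∀ g ∈ O, ∃ (W : Set (X × ℝ)) (L : List (Set (X × ℝ))), IsOpen W ∧ graphOf ⇑g ⊆ W ∧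
      (∀ V ∈ L, IsOpen V ∧ (graphOf ⇑g ∩ V).Nonempty) ∧
      ∀ h : C(X, ℝ), graphOf ⇑h ⊆ W → (∀ V ∈ L, (graphOf ⇑h ∩ V).Nonempty) → h ∈ O := by
  have hO' : GenerateOpen
      ({U | ∃ W : Set (X × ℝ), IsOpen W ∧ U = {f : C(X, ℝ) | graphOf ⇑f ⊆ W}} ∪
       {U | ∃ W : Set (X × ℝ), IsOpen W ∧ U = {f : C(X, ℝ) | (graphOf ⇑f ∩ W).Nonempty}}) O := hO
  clear hO
  induction hO' with
  | basic u hu =>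
      rcases hu with ⟨W, hW, rfl⟩ | ⟨W, hW, rfl⟩
      · exact fun g hg => ⟨W, [], hW, hg, by simp, fun h hh _ => hh⟩
      · exact fun g hg => ⟨univ, [W], isOpen_univ, subset_univ _,
          by simpa using ⟨hW, hg⟩, fun h _ hh => hh W (by simp)⟩
  | univ => exact fun g _ => ⟨univ, [], isOpen_univ, subset_univ _, by simp, fun _ _ _ => trivial⟩
  | inter u v _ _ ihu ihv =>
      rintro g ⟨hgu, hgv⟩
      obtain ⟨W₁, L₁, hW₁, hg₁, hL₁, hsub₁⟩ := ihu g hgu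
      obtain ⟨W₂, L₂, hW₂, hg₂, hL₂, hsub₂⟩ := ihv g hgv
      refine ⟨W₁ ∩ W₂, L₁ ++ L₂, hW₁.inter hW₂, subset_inter hg₁ hg₂, ?_, ?_⟩
      · intro V hV
        rcases List.mem_append.mp hV with h | h
        exacts [hL₁ V h, hL₂ V h]
      · intro h hh hmeet
        refine ⟨hsub₁ h (hh.trans inter_subset_left) (fun V hV => hmeet V (List.mem_append.mpr (Or.inl hV))),
          hsub₂ h (hh.trans inter_subset_right) (fun V hV => hmeet V (List.mem_append.mpr (Or.inr hV)))⟩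
  | sUnion S _ ih =>
      rintro g ⟨u, hu, hg⟩
      obtain ⟨W, L, h1, h2, h3, h4⟩ := ih u hu g hg
      exact ⟨W, L, h1, h2, h3, fun h hh hmeet => ⟨u, hu, h4 h hh hmeet⟩⟩



variable {X : Type*} [TopologicalSpace X]

/-- From non-countable-compactness, extract an injective sequence all of whose
subsets (of the range) are closed. -/
lemma exists_discrete_seq [T1Space X] (hncc : ¬CountablyCompact X) :
    ∃ p : ℕ → X, Function.Injective p ∧ ∀ S : Set ℕ, IsClosed (p '' S) := by
  rw [CountablyCompact] at hncc
  push_neg at hncc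
  obtain ⟨U, hUopen, hUcover, hnofin⟩ := hncc
  set C : ℕ → Set X := fun n => ⋃ i ∈ Finset.range (n+1), U i with hC
  have hCopen : ∀ n, IsOpen (C n) := fun n => isOpen_biUnion (fun i _ => hUopen i)
  have hCmono : ∀ n m, n ≤ m → C n ⊆ C m := by
    intro n m hnm x hx
    obtain ⟨i, hi, hxi⟩ := Set.mem_iUnion₂.mp hx
    exact Set.mem_iUnion₂.mpr ⟨i, Finset.mem_range.mpr (lt_of_lt_of_le (Finset.mem_range.mp hi) (by omega)), hxi⟩
  have hCcover : ∀ x : X, ∃ n, x ∈ C n := by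
    intro x
    have : x ∈ ⋃ n, U n := hUcover ▸ Set.mem_univ x
    obtain ⟨n, hn⟩ := Set.mem_iUnion.mp this
    exact ⟨n, Set.mem_iUnion₂.mpr ⟨n, Finset.mem_range.mpr (by omega), hn⟩⟩
  have hCne : ∀ n, ∃ x, x ∉ C n := by
    intro n
    by_contra hall
    push_neg at hall
    exact hnofin (Finset.range (n+1)) (Set.eq_univ_of_forall hall)
  choose e he using hCne
  -- key: e n ∈ C m → n < m
  have hkey : ∀ n m, e n ∈ C m → n < m := by
    intro n m hmem
    by_contra hle
    push_neg at hle
    exact he n (hCmono m n hle hmem)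
  -- subsets of the range of e are closed
  have hclosed : ∀ S : Set X, S ⊆ Set.range e → IsClosed S := by
    intro S hS
    rw [← isOpen_compl_iff, isOpen_iff_mem_nhds]
    intro x hx
    obtain ⟨m, hm⟩ := hCcover x
    have hfin : (e '' {i | i < m}).Finite := Set.Finite.image _ (Set.finite_lt_nat m)
    have hTclosed : IsClosed ((e '' {i | i < m}) \ {x}) := (hfin.diff (t := {x})).isClosed
    refine Filter.mem_of_superset (IsOpen.mem_nhds (hCopen m |>.sdiff hTclosed) ⟨hm, ?_⟩) ?_
    · rintro ⟨-, hne⟩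
      exact hne rfl
    · rintro y ⟨hyC, hyT⟩ hyS
      obtain ⟨n, rfl⟩ := hS hyS
      exact hyT ⟨⟨n, hkey n m hyC, rfl⟩, fun h => hx (h ▸ hyS)⟩
  -- recursive subsequence
  choose m hm using hCcover
  let μ : ℕ → ℕ := fun k => Nat.rec 0 (fun _ prev => m (e prev)) k
  have hμsucc : ∀ k, e (μ k) ∈ C (μ (k+1)) := fun k => hm (e (μ k))
  have hμlt : ∀ k, μ k < μ (k+1) := fun k => hkey _ _ (hμsucc k)
  have hμmono : StrictMono μ := strictMono_nat_of_lt_succ hμlt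
  have hone : ∀ a b, a < b → e (μ a) ≠ e (μ b) := by
    intro a b hab heq
    have h1 : e (μ a) ∈ C (μ b) := hCmono (μ (a+1)) (μ b) (hμmono.monotone hab) (hμsucc a)
    rw [heq] at h1
    exact he (μ b) h1
  refine ⟨fun k => e (μ k), ?_, ?_⟩
  · intro j k hjk
    rcases lt_trichotomy j k with h | h | h
    · exact absurd hjk (hone j k h)
    · exact h
    · exact absurd hjk.symm (hone k j h)
  · intro S
    apply hclosed
    rintro x ⟨n, _, rfl⟩
    exact ⟨μ n, rfl⟩







lemma exists_bump [CompletelyRegularSpace X] {x : X} {P : Set X} (hP : IsOpen P) (hx : x ∈ P) :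
    ∃ ψ : C(X, ℝ), ψ x = 1 ∧ (∀ y, ψ y ∈ Icc (0:ℝ) 1) ∧ ∀ y, y ∉ P → ψ y = 0 := by
  obtain ⟨f, hf, hfx, hf1⟩ := CompletelyRegularSpace.completely_regular x Pᶜ
    (isClosed_compl_iff.mpr hP) (by simpa)
  refine ⟨⟨fun y => 1 - (f y : ℝ), by fun_prop⟩, ?_, ?_, ?_⟩
  · simp [hfx]
  · intro y
    constructor
    · simp only [ContinuousMap.coe_mk]
      linarith [(f y).2.2]
    · simp only [ContinuousMap.coe_mk]
      linarith [(f y).2.1]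
  · intro y hy
    have : f y = 1 := hf1 hy
    simp [this]

lemma exists_system [T1Space X] [CompletelyRegularSpace X] (hncc : ¬CountablyCompact X) :
    ∃ (p : ℕ → X) (O B : ℕ → Set X),
      Function.Injective p ∧ (∀ S : Set ℕ, IsClosed (p '' S)) ∧
      (∀ i, IsOpen (O i)) ∧ (∀ i, O i ⊆ B i) ∧
      (∀ i, p i ∈ O i) ∧ (∀ i j, i ≠ j → ∀ x, x ∈ B i → x ∈ B j → False) ∧
      (∀ i j, p j ∈ B i → j = i) := by
  obtain ⟨p, hpinj, hpclosed⟩ := exists_discrete_seq hncc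
  have hφ : ∀ i : ℕ, ∃ φ : C(X, ℝ), φ (p i) = 1 ∧ (∀ y, φ y ∈ Icc (0:ℝ) 1) ∧
      ∀ j, j ≠ i → φ (p j) = 0 := by
    intro i
    have hKcl : IsClosed (p '' {j | j ≠ i}) := hpclosed _
    have hmem : p i ∈ (p '' {j | j ≠ i})ᶜ := by
      rintro ⟨j, hj, hpj⟩
      exact hj (hpinj hpj)
    obtain ⟨ψ, hψ1, hψI, hψ0⟩ := exists_bump hKcl.isOpen_compl hmem
    exact ⟨ψ, hψ1, hψI, fun j hj => hψ0 _ (fun hc => hc ⟨j, hj, rfl⟩)⟩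
  choose φ hφ1 hφI hφ0 using hφ
  refine ⟨p, fun i => {x | 3/4 < φ i x} ∩ ⋂ j ∈ Finset.range i, {x | φ j x < 1/2},
    fun i => {x | 3/4 ≤ φ i x} ∩ ⋂ j ∈ Finset.range i, {x | φ j x ≤ 1/2},
    hpinj, hpclosed, ?_, ?_, ?_, ?_, ?_⟩
  · intro i
    apply IsOpen.inter (isOpen_lt continuous_const (φ i).continuous)
    exact isOpen_biInter_finset fun j _ => isOpen_lt (φ j).continuous continuous_const
  · rintro i x ⟨h1, h2⟩
    refine ⟨show (3:ℝ)/4 ≤ φ i x from le_of_lt h1, ?_⟩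
    simp only [Set.mem_iInter] at h2 ⊢
    exact fun j hj => show (φ j) x ≤ 1/2 from le_of_lt (h2 j hj)
  · intro i
    refine ⟨show (3:ℝ)/4 < φ i (p i) by rw [hφ1 i]; norm_num, ?_⟩
    simp only [Set.mem_iInter]
    intro j hj
    show φ j (p i) < 1/2
    rw [hφ0 j i (by have := Finset.mem_range.mp hj; omega)]
    norm_num
  · intro i j hij x hxi hxj
    rcases Nat.lt_or_ge i j with h | h
    · have h1 : 3/4 ≤ φ i x := hxi.1
      have h2 : φ i x ≤ 1/2 := by
        have := hxj.2
        simp only [Set.mem_iInter] at this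
        exact this i (Finset.mem_range.mpr h)
      linarith
    · have h' : j < i := by omega
      have h1 : 3/4 ≤ φ j x := hxj.1
      have h2 : φ j x ≤ 1/2 := by
        have := hxi.2
        simp only [Set.mem_iInter] at this
        exact this j (Finset.mem_range.mpr h')
      linarith
  · intro i j hmem
    by_contra hne
    have h1 : 3/4 ≤ φ i (p j) := hmem.1
    rw [hφ0 i j hne] at h1
    norm_num at h1

lemma exists_sum (c : ℕ → ℝ) (hc0 : ∀ i, 0 ≤ c i) (hc1 : ∀ i, c i ≤ 1/(i+1))
    (ψ : ℕ → C(X, ℝ)) (hψI : ∀ i y, ψ i y ∈ Icc (0:ℝ) 1)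
    (hdisj : ∀ y i j, i ≠ j → ψ i y ≠ 0 → ψ j y = 0) :
    ∃ f : C(X, ℝ), (∀ y i, ψ i y ≠ 0 → f y = c i * ψ i y) ∧
      (∀ y, (∀ i, ψ i y = 0) → f y = 0) := by
  set f0 : X → ℝ := fun y => ∑' i, c i * ψ i y with hf0
  have claim1 : ∀ y i, ψ i y ≠ 0 → f0 y = c i * ψ i y := by
    intro y i hi
    exact tsum_eq_single i fun j hj => by rw [hdisj y i j (Ne.symm hj) hi, mul_zero]
  have claim0 : ∀ y, (∀ i, ψ i y = 0) → f0 y = 0 := by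
    intro y h
    have : (fun i => c i * ψ i y) = fun _ => 0 := funext fun i => by rw [h i, mul_zero]
    rw [hf0]; simp only [this, tsum_zero]
  have hbound : ∀ (n : ℕ) (y : X), |f0 y - ∑ i ∈ Finset.range n, c i * ψ i y| ≤ 1/(n+1) := by
    intro n y
    by_cases hex : ∃ i, ψ i y ≠ 0
    · obtain ⟨i, hi⟩ := hex
      rw [claim1 y i hi]
      rcases Nat.lt_or_ge i n with h | h
      · rw [Finset.sum_eq_single_of_mem i (Finset.mem_range.mpr h)
          (fun j _ hj => by rw [hdisj y i j (Ne.symm hj) hi, mul_zero])]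
        simp only [sub_self, abs_zero]
        positivity
      · rw [Finset.sum_eq_zero (fun j hj => by
          rw [hdisj y i j (by have := Finset.mem_range.mp hj; omega) hi, mul_zero])]
        rw [sub_zero, abs_of_nonneg (mul_nonneg (hc0 i) (hψI i y).1)]
        calc c i * ψ i y ≤ c i * 1 := mul_le_mul_of_nonneg_left (hψI i y).2 (hc0 i)
          _ = c i := mul_one _
          _ ≤ 1/(i+1) := hc1 i
          _ ≤ 1/(n+1) := by
              apply one_div_le_one_div_of_le (by positivity)
              exact_mod_cast by omega
    · push_neg at hex
      rw [claim0 y hex, Finset.sum_eq_zero (fun j _ => by rw [hex j, mul_zero])]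
      simp only [sub_zero, abs_zero]
      positivity
  have hTU : TendstoUniformly (fun n y => ∑ i ∈ Finset.range n, c i * ψ i y) f0 Filter.atTop := by
    rw [Metric.tendstoUniformly_iff]
    intro ε hε
    obtain ⟨N, hN⟩ := exists_nat_one_div_lt hε
    rw [Filter.eventually_atTop]
    refine ⟨N, fun n hn x => ?_⟩
    rw [Real.dist_eq]
    calc |f0 x - ∑ i ∈ Finset.range n, c i * ψ i x| ≤ 1/(n+1) := hbound n x
      _ ≤ 1/(N+1) := by
          apply one_div_le_one_div_of_le (by positivity)
          exact_mod_cast by omega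
      _ < ε := hN
  have hcont : Continuous f0 := by
    apply hTU.continuous
    apply Filter.Frequently.of_forall
    intro n
    exact continuous_finset_sum _ fun i _ => continuous_const.mul (ψ i).continuous
  exact ⟨⟨f0, hcont⟩, claim1, claim0⟩






noncomputable def nuAux (T : ℕ → Set ℕ) (S : Set ℕ) : ℕ → ℕ
  | k => sInf {i | i ∈ T k ∧ i ∉ S ∧ ∀ j, ∀ _ : j < k, nuAux T S j ≠ i}
  decreasing_by assumption

lemma nuAux_spec {T : ℕ → Set ℕ} (hT : ∀ k, (T k).Infinite) {S : Set ℕ} (hS : S.Finite)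
    (k : ℕ) : nuAux T S k ∈ T k ∧ nuAux T S k ∉ S ∧ ∀ j, j < k → nuAux T S j ≠ nuAux T S k := by
  have hne : {i | i ∈ T k ∧ i ∉ S ∧ ∀ j, ∀ _ : j < k, nuAux T S j ≠ i}.Nonempty := by
    have hsub : T k \ (S ∪ (fun j => nuAux T S j) '' {j | j < k}) ⊆
        {i | i ∈ T k ∧ i ∉ S ∧ ∀ j, ∀ _ : j < k, nuAux T S j ≠ i} := by
      rintro i ⟨hiT, hi⟩
      refine ⟨hiT, fun hiS => hi (Or.inl hiS), fun j hj hji => hi (Or.inr ⟨j, hj, hji⟩)⟩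
    exact Set.Nonempty.mono hsub (((hT k).diff (hS.union ((Set.finite_lt_nat k).image _))).nonempty)
  have hmem := Nat.sInf_mem hne
  rw [nuAux]
  exact ⟨hmem.1, hmem.2.1, fun j hj => hmem.2.2 j hj⟩

lemma nuAux_inj {T : ℕ → Set ℕ} (hT : ∀ k, (T k).Infinite) {S : Set ℕ} (hS : S.Finite) :
    Function.Injective (nuAux T S) := by
  intro j k hjk
  rcases lt_trichotomy j k with h | h | h
  · exact absurd hjk ((nuAux_spec hT hS k).2.2 j h)
  · exact h
  · exact absurd hjk.symm ((nuAux_spec hT hS j).2.2 k h)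



theorem not_sequential [T2Space X] [CompletelyRegularSpace X] (hncc : ¬CountablyCompact X) :
    ¬ @SequentialSpace C(X, ℝ) (cxVietoris X) := by
  intro hseq
  letI : TopologicalSpace C(X, ℝ) := cxVietoris X
  obtain ⟨p, O, B, hpinj, hpcl, hOopen, hOB, hpO, hBdisj, hBp⟩ := exists_system hncc
  have hrange : IsClosed (Set.range p) := by
    have := hpcl Set.univ
    rwa [Set.image_univ] at this
  set A : Set C(X, ℝ) := {f | {i | f (p i) ≠ 0}.Infinite} with hA
  -- A is sequentially closed
  have hseqcl : IsSeqClosed A := by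
    intro f_ g hmem hconv
    classical
    by_contra hgA
    rw [hA, Set.mem_setOf_eq, Set.not_infinite] at hgA
    set S : Set ℕ := {i | g (p i) ≠ 0} with hS
    set T : ℕ → Set ℕ := fun k => {i | f_ k (p i) ≠ 0} with hT
    have hTinf : ∀ k, (T k).Infinite := fun k => hmem k
    set ν : ℕ → ℕ := nuAux T S with hν
    have hνspec : ∀ k, ν k ∈ T k ∧ ν k ∉ S ∧ ∀ j, j < k → ν j ≠ ν k :=
      fun k => nuAux_spec hTinf hgA k
    have hνinj : Function.Injective ν := nuAux_inj hTinf hgA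
    -- the blocking open set
    set J : ℕ → Set ℝ := fun i => if h : ∃ k, ν k = i then
      Ioo (-(|f_ (Classical.choose h) (p i)|)) (|f_ (Classical.choose h) (p i)|) else Set.univ
      with hJ
    have hJopen : ∀ i, IsOpen (J i) := by
      intro i
      by_cases hex : ∃ k, ν k = i
      · simp only [hJ, dif_pos hex]
        exact isOpen_Ioo
      · simp only [hJ, dif_neg hex]
        exact isOpen_univ
    set W : Set (X × ℝ) := ((Set.range p)ᶜ ×ˢ (Set.univ : Set ℝ)) ∪ ⋃ i, (O i) ×ˢ (J i) with hW
    have hWopen : IsOpen W :=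
      (hrange.isOpen_compl.prod isOpen_univ).union
        (isOpen_iUnion fun i => (hOopen i).prod (hJopen i))
    have hgW : graphOf ⇑g ⊆ W := by
      rintro ⟨x, y⟩ hxy
      have hy : y = g x := hxy
      subst hy
      by_cases hx : x ∈ Set.range p
      · obtain ⟨i, rfl⟩ := hx
        right
        refine Set.mem_iUnion.mpr ⟨i, hpO i, ?_⟩
        show g (p i) ∈ J i
        by_cases hex : ∃ k, ν k = i
        · have hch : ν (Classical.choose hex) = i := Classical.choose_spec hex
          have hiS : i ∉ S := hch ▸ (hνspec (Classical.choose hex)).2.1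
          have hgz : g (p i) = 0 := not_not.mp hiS
          have hpos : f_ (Classical.choose hex) (p i) ≠ 0 := by
            have := (hνspec (Classical.choose hex)).1
            rw [hch] at this
            exact this
          simp only [hJ, dif_pos hex, Set.mem_Ioo, hgz]
          constructor
          · simpa using abs_pos.mpr hpos
          · exact abs_pos.mpr hpos
        · simp only [hJ, dif_neg hex]
          trivial
      · exact Or.inl ⟨hx, trivial⟩
    -- eventual containment gives a contradiction
    have hop : IsOpen {h : C(X, ℝ) | graphOf ⇑h ⊆ W} :=
      TopologicalSpace.GenerateOpen.basic _ (Or.inl ⟨W, hWopen, rfl⟩)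
    have hev : ∀ᶠ k in Filter.atTop, f_ k ∈ {h : C(X, ℝ) | graphOf ⇑h ⊆ W} :=
      hconv (hop.mem_nhds hgW)
    obtain ⟨k, hk⟩ := hev.exists
    have hpt : (p (ν k), f_ k (p (ν k))) ∈ W :=
      hk (show ((p (ν k), f_ k (p (ν k))) : X × ℝ) ∈ graphOf ⇑(f_ k) from rfl)
    rcases hpt with ⟨hc, -⟩ | hpt
    · exact hc ⟨ν k, rfl⟩
    · obtain ⟨i, hOi, hJi⟩ := Set.mem_iUnion.mp hpt
      have hieq : ν k = i := hBp i (ν k) (hOB i hOi)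
      subst hieq
      have hJi' : f_ k (p (ν k)) ∈ J (ν k) := hJi
      have hex : ∃ k', ν k' = ν k := ⟨k, rfl⟩
      have hch : Classical.choose hex = k := hνinj (Classical.choose_spec hex)
      simp only [hJ, dif_pos hex, hch, Set.mem_Ioo] at hJi'
      rcases le_or_gt 0 (f_ k (p (ν k))) with h0 | h0
      · rw [abs_of_nonneg h0] at hJi'
        exact absurd hJi'.2 (lt_irrefl _)
      · rw [abs_of_neg h0] at hJi'
        have h2 := hJi'.1
        simp only [neg_neg] at h2
        exact absurd h2 (lt_irrefl _)
  -- A is therefore closed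
  have hAclosed : IsClosed A := hseqcl.isClosed
  -- but the zero function is in the closure of A and not in A
  have h0A : (0 : C(X, ℝ)) ∉ A := by
    rw [hA, Set.mem_setOf_eq, Set.not_infinite]
    have : {i : ℕ | (0 : C(X, ℝ)) (p i) ≠ 0} = ∅ := by
      ext i; simp
    rw [this]
    exact Set.finite_empty
  have h0cl : (0 : C(X, ℝ)) ∈ closure A := by
    rw [mem_closure_iff]
    intro o ho h0o
    obtain ⟨W, L, hWopen, hgrW, hL, hsub⟩ := vietoris_nbhd ho 0 h0o
    -- pick witness points for the minus-parts
    have hzex : ∀ V : {V // V ∈ L}, ∃ x : X, (x, (0:ℝ)) ∈ (V : Set (X × ℝ)) := by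
      rintro ⟨V, hV⟩
      obtain ⟨q, hqg, hqV⟩ := (hL V hV).2
      refine ⟨q.1, ?_⟩
      have hq2 : q.2 = (0:ℝ) := by simpa [graphOf] using hqg
      have : ((q.1, (0:ℝ)) : X × ℝ) = q := by
        rw [← hq2]
      rwa [this]
    choose z hz using hzex
    set zs : List X := L.attach.map z with hzs
    set Z : Set X := {x | x ∈ zs} with hZ
    have hZfin : Z.Finite := zs.finite_toSet
    have hZcl : IsClosed Z := hZfin.isClosed
    -- per-index bumps
    have key : ∀ i : ℕ, ∃ (ci : ℝ) (ψi : C(X, ℝ)), 0 ≤ ci ∧ ci ≤ 1/((i:ℝ)+1) ∧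
        (∀ y, ψi y ∈ Icc (0:ℝ) 1) ∧ (∀ y, ψi y ≠ 0 → y ∈ O i ∧ y ∉ Z) ∧
        (∀ y, ψi y ≠ 0 → (y, ci * ψi y) ∈ W) ∧ (p i ∉ Z → ci ≠ 0 ∧ ψi (p i) = 1) := by
      intro i
      by_cases hpi : p i ∈ Z
      · refine ⟨0, 0, le_rfl, by positivity, fun y => ?_, fun y hy => absurd rfl hy,
          fun y hy => absurd rfl hy, fun h => absurd hpi h⟩
        simp only [ContinuousMap.zero_apply, mem_Icc]
        exact ⟨le_rfl, zero_le_one⟩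
      · have hmemW : (p i, (0:ℝ)) ∈ W :=
          hgrW (show ((p i, (0:ℝ)) : X × ℝ) ∈ graphOf ⇑(0 : C(X,ℝ)) by simp [graphOf])
        obtain ⟨u, v, hu, hv, hxu, hyv, huv⟩ := isOpen_prod_iff.mp hWopen (p i) 0 hmemW
        obtain ⟨δ, hδ, hball⟩ := Metric.isOpen_iff.mp hv 0 hyv
        have hPopen : IsOpen ((u ∩ O i) \ Z) := (hu.inter (hOopen i)).sdiff hZcl
        have hpP : p i ∈ (u ∩ O i) \ Z := ⟨⟨hxu, hpO i⟩, hpi⟩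
        obtain ⟨ψ, hψ1, hψI, hψ0⟩ := exists_bump hPopen hpP
        have hmemP : ∀ y, ψ y ≠ 0 → y ∈ (u ∩ O i) \ Z := by
          intro y hy
          by_contra h
          exact hy (hψ0 y h)
        refine ⟨min (δ/2) (1/((i:ℝ)+1)), ψ, le_min (by positivity) (by positivity), min_le_right _ _, hψI,
          fun y hy => ⟨(hmemP y hy).1.2, (hmemP y hy).2⟩, ?_,
          fun _ => ⟨ne_of_gt (lt_min (by positivity) (by positivity)), hψ1⟩⟩
        intro y hy
        apply huv
        refine ⟨(hmemP y hy).1.1, hball ?_⟩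
        rw [Metric.mem_ball, Real.dist_eq, sub_zero]
        have h1 : |min (δ/2) (1/((i:ℝ)+1)) * ψ y| ≤ min (δ/2) (1/((i:ℝ)+1)) * 1 := by
          rw [abs_of_nonneg (mul_nonneg (le_min (by positivity) (by positivity)) (hψI y).1)]
          exact mul_le_mul_of_nonneg_left (hψI y).2 (le_min (by positivity) (by positivity))
        calc |min (δ/2) (1/((i:ℝ)+1)) * ψ y| ≤ min (δ/2) (1/((i:ℝ)+1)) * 1 := h1
          _ = min (δ/2) (1/((i:ℝ)+1)) := mul_one _
          _ ≤ δ/2 := min_le_left _ _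
          _ < δ := by linarith
    choose c ψ hc0 hc1 hψI hsupp hWmem hgood using key
    have hdisj : ∀ y i j, i ≠ j → ψ i y ≠ 0 → ψ j y = 0 := by
      intro y i j hij hi
      by_contra hj
      exact hBdisj i j hij y (hOB i (hsupp i y hi).1) (hOB j (hsupp j y hj).1)
    obtain ⟨f, hf1, hf0⟩ := exists_sum c hc0 hc1 ψ hψI hdisj
    refine ⟨f, ?_, ?_⟩
    · -- f ∈ o
      apply hsub
      · rintro ⟨x, y⟩ hxy
        have hy : y = f x := hxy
        subst hy
        by_cases hex : ∃ i, ψ i x ≠ 0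
        · obtain ⟨i, hi⟩ := hex
          rw [hf1 x i hi]
          exact hWmem i x hi
        · push_neg at hex
          rw [hf0 x hex]
          exact hgrW (show ((x, (0:ℝ)) : X × ℝ) ∈ graphOf ⇑(0 : C(X,ℝ)) by simp [graphOf])
      · intro V hV
        refine ⟨(z ⟨V, hV⟩, (0:ℝ)), ?_, hz ⟨V, hV⟩⟩
        have hzZ : z ⟨V, hV⟩ ∈ Z := by
          rw [hZ, hzs]
          simp only [Set.mem_setOf_eq, List.mem_map]
          exact ⟨⟨V, hV⟩, L.mem_attach _, rfl⟩
        have hf0z : f (z ⟨V, hV⟩) = 0 := by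
          apply hf0
          intro i
          by_contra hne
          exact (hsupp i _ hne).2 hzZ
        exact (show ((0:ℝ)) = f (z ⟨V, hV⟩) from hf0z.symm)

    · -- f ∈ A
      rw [hA, Set.mem_setOf_eq]
      have hsubA : {i : ℕ | p i ∉ Z} ⊆ {i | f (p i) ≠ 0} := by
        intro i hi
        show f (p i) ≠ 0
        obtain ⟨hci, hψ1⟩ := hgood i hi
        have : f (p i) = c i * ψ i (p i) := hf1 (p i) i (by rw [hψ1]; norm_num)
        rw [this, hψ1, mul_one]
        exact hci
      have hfin : {i : ℕ | p i ∈ Z}.Finite := hZfin.preimage hpinj.injOn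
      have hinf : {i : ℕ | p i ∉ Z}.Infinite := by
        have : {i : ℕ | p i ∉ Z} = {i : ℕ | p i ∈ Z}ᶜ := rfl
        rw [this]
        exact hfin.infinite_compl
      exact hinf.mono hsubA
  rw [hAclosed.closure_eq] at h0cl
  exact h0A h0cl



end CxTFAE

/-- For a Tychonoff space `X`, the following are equivalent: `(C(X), τ_V)` is
metrizable; first countable; Fréchet–Urysohn; sequential; `X` is countably compact;
`τ_V = τ_U` on `C(X)`. -/



theorem cxVietoris_tfae {X : Type*} [TopologicalSpace X] [T2Space X]
    [CompletelyRegularSpace X] :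
    List.TFAE
      [@MetrizableSpace C(X, ℝ) (cxVietoris X),
       @FirstCountableTopology C(X, ℝ) (cxVietoris X),
       @FrechetUrysohnSpace C(X, ℝ) (cxVietoris X),
       @SequentialSpace C(X, ℝ) (cxVietoris X),
       CountablyCompact X,
       cxVietoris X = cxUniform X] := by
  tfae_have 1 → 2 := by
    intro h
    letI := cxVietoris X
    haveI := h
    infer_instance
  tfae_have 2 → 3 := by
    intro h
    letI := cxVietoris X
    haveI := h
    infer_instance
  tfae_have 3 → 4 := by
    intro h
    letI := cxVietoris X
    haveI := h
    infer_instance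
  tfae_have 4 → 5 := by
    intro h4
    by_contra hncc
    exact CxTFAE.not_sequential hncc h4
  tfae_have 5 → 6 := fun h5 => CxTFAE.vietoris_eq_uniform h5
  tfae_have 6 → 1 := by
    intro h6
    rw [h6]
    exact CxTFAE.metrizable_uniform
  tfae_finish
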